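/- Let m be an even positive integer, let d = 2^s for some integer s ≥ 1, and let n > m·d. Consider any deterministic sequential protocol for n parties that solves the sequential n-point modulo-(m,d) problem with certainty. Then there exist indices a and L with L ≥ (n − m·d)/(m·d) such that for every k with a ≤ k < a + L (and 1 ≤ k ≤ n−1), the message alphabet satisfies m·|M_k| ≥ d; that is, the protocol contains a run of at least (n − m·d)/(m·d) consecutive stages each of which sends at least log₂(d/m) bits of communication. -/

import Mathlib

/-- A deterministic sequential protocol for `n` parties in the sequential `n`-point
modulo-`(m,d)` problem.  Stage `k+1` (1-indexed) receives a message from alphabet `Msg k`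
(`Msg 0` being a one-element set), together with its input in `Fin d`, produces an output
in `Fin m` and sends a message from alphabet `Msg (k+1)` to the following party. -/
structure SeqProtocol (n m d : ℕ) where
  Msg : ℕ → Type
  msgFintype : ∀ k, Fintype (Msg k)
  msgInit : Msg 0
  msgInitSubsingleton : Subsingleton (Msg 0)
  out : (k : ℕ) → Fin d → Msg k → Fin m
  send : (k : ℕ) → Fin d → Msg k → Msg (k + 1)

namespace SeqProtocol

variable {n m d : ℕ}

/-- The message produced after the first `k` stages on input `X` (where `X k` is the
input of the `(k+1)`-st party, 0-indexed). -/
def run (P : SeqProtocol n m d) (X : ℕ → Fin d) : (k : ℕ) → P.Msg k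
  | 0 => P.msgInit
  | k + 1 => P.send k (X k) (P.run X k)

/-- The protocol solves the sequential `n`-point modulo-`(m,d)` problem with certainty:
for every input `X` with `∑ X k ≡ 0 (mod d)`, the outputs `Y` satisfy
`d * ∑ Y k ≡ ∑ X k (mod m·d)`. -/
def Solves (P : SeqProtocol n m d) : Prop :=
  ∀ X : ℕ → Fin d,
    (d : ℤ) ∣ (∑ k ∈ Finset.range n, ((X k : ℕ) : ℤ)) →
    ((d : ℤ) * ∑ k ∈ Finset.range n, ((P.out k (X k) (P.run X k) : ℤ))) ≡
      (∑ k ∈ Finset.range n, ((X k : ℕ) : ℤ)) [ZMOD ((m : ℤ) * d)]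

end SeqProtocol

namespace SeqProtocol

variable {n m d : ℕ}

lemma run_succ (P : SeqProtocol n m d) (X : ℕ → Fin d) (k : ℕ) :
    P.run X (k+1) = P.send k (X k) (P.run X k) := rfl

lemma run_congr (P : SeqProtocol n m d) {X Y : ℕ → Fin d} :
    ∀ k, (∀ i, i < k → X i = Y i) → P.run X k = P.run Y k := by
  intro k
  induction k with
  | zero => intro _; rfl
  | succ k ih =>
    intro h
    have h1 := ih (fun i hi => h i (Nat.lt_succ_of_lt hi))
    rw [run_succ, run_succ, h1, h k (Nat.lt_succ_self k)]

def vI (P : SeqProtocol n m d) (X : ℕ → Fin d) (k : ℕ) : ℤ :=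
  ∑ i ∈ Finset.range k, (((X i : ℕ) : ℤ) - (d : ℤ) * ((P.out i (X i) (P.run X i)) : ℤ))

lemma vI_congr (P : SeqProtocol n m d) {X Y : ℕ → Fin d} (k : ℕ)
    (h : ∀ i, i < k → X i = Y i) : P.vI X k = P.vI Y k := by
  unfold vI
  refine Finset.sum_congr rfl (fun i hi => ?_)
  have hi' := Finset.mem_range.mp hi
  rw [h i hi', P.run_congr i (fun j hj => h j (hj.trans hi'))]

lemma vI_succ (P : SeqProtocol n m d) (X : ℕ → Fin d) (k : ℕ) :
    P.vI X (k+1) = P.vI X k + (((X k : ℕ) : ℤ) - (d:ℤ) * ((P.out k (X k) (P.run X k)) : ℤ)) :=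
  Finset.sum_range_succ _ k

def Reach (P : SeqProtocol n m d) (k : ℕ) (μ : P.Msg k) (v : ZMod (m*d)) : Prop :=
  ∃ X : ℕ → Fin d, P.run X k = μ ∧ ((P.vI X k : ℤ) : ZMod (m*d)) = v

lemma vI_split (P : SeqProtocol n m d) (X : ℕ → Fin d) (k : ℕ) :
    P.vI X k = (∑ i ∈ Finset.range k, ((X i : ℕ) : ℤ))
      - (d:ℤ) * (∑ i ∈ Finset.range k, ((P.out i (X i) (P.run X i)) : ℤ)) := by
  unfold vI
  rw [Finset.sum_sub_distrib, Finset.mul_sum]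

lemma class_unique (P : SeqProtocol n m d) (hP : P.Solves) (hm0 : 0 < m) (hd0 : 0 < d)
    {k : ℕ} (hk : k < n) {μ : P.Msg k} {v1 v2 : ZMod (m*d)}
    (h1 : P.Reach k μ v1) (h2 : P.Reach k μ v2)
    (hc : ZMod.castHom (dvd_mul_left d m) (ZMod d) v1 =
          ZMod.castHom (dvd_mul_left d m) (ZMod d) v2) : v1 = v2 := by
  haveI : NeZero d := ⟨hd0.ne'⟩
  haveI : NeZero (m*d) := ⟨(Nat.mul_pos hm0 hd0).ne'⟩
  obtain ⟨X1, hr1, hv1⟩ := h1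
  obtain ⟨X2, hr2, hv2⟩ := h2
  classical
  -- congruence mod d of the vI's
  have hcd : (d:ℤ) ∣ P.vI X2 k - P.vI X1 k := by
    have e1 : ((P.vI X1 k : ℤ) : ZMod d) = ((P.vI X2 k : ℤ) : ZMod d) := by
      have t1 := map_intCast (ZMod.castHom (dvd_mul_left d m) (ZMod d)) (P.vI X1 k)
      have t2 := map_intCast (ZMod.castHom (dvd_mul_left d m) (ZMod d)) (P.vI X2 k)
      rw [← t1, ← t2, hv1, hv2, hc]
    exact ((ZMod.intCast_eq_intCast_iff _ _ _).mp e1).dvd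
  set S1 := ∑ i ∈ Finset.range k, ((X1 i : ℕ) : ℤ) with hS1
  set S2 := ∑ i ∈ Finset.range k, ((X2 i : ℕ) : ℤ) with hS2
  set Y1 := ∑ i ∈ Finset.range k, ((P.out i (X1 i) (P.run X1 i)) : ℤ) with hY1
  set Y2 := ∑ i ∈ Finset.range k, ((P.out i (X2 i) (P.run X2 i)) : ℤ) with hY2
  have hvS1 : P.vI X1 k = S1 - d * Y1 := P.vI_split X1 k
  have hvS2 : P.vI X2 k = S2 - d * Y2 := P.vI_split X2 k
  have hSd : (d:ℤ) ∣ S2 - S1 := by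
    have e : S2 - S1 = (P.vI X2 k - P.vI X1 k) + d * (Y2 - Y1) := by
      rw [hvS1, hvS2]; ring
    rw [e]; exact dvd_add hcd ⟨Y2 - Y1, rfl⟩
  set xs : Fin d := ⟨(-(S1 : ZMod d)).val, ZMod.val_lt _⟩ with hxs
  have hxscast : ((xs : ℕ) : ZMod d) = -((S1 : ℤ) : ZMod d) := by
    show (((-(S1 : ZMod d)).val : ℕ) : ZMod d) = -((S1 : ℤ) : ZMod d)
    rw [ZMod.natCast_val, ZMod.cast_id]
  set Z1 : ℕ → Fin d := fun i => if i < k then X1 i else if i = k then xs else ⟨0, hd0⟩ with hZ1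
  set Z2 : ℕ → Fin d := fun i => if i < k then X2 i else if i = k then xs else ⟨0, hd0⟩ with hZ2
  -- splitting of the input sums
  have hsplit : ∀ (W : ℕ → Fin d), (∀ i, k < i → W i = ⟨0, hd0⟩) →
      ∑ i ∈ Finset.range n, ((W i : ℕ) : ℤ)
        = (∑ i ∈ Finset.range k, ((W i : ℕ) : ℤ)) + ((W k : ℕ) : ℤ) := by
    intro W hW
    rw [← Finset.sum_range_add_sum_Ico _ (le_of_lt hk),
        Finset.sum_eq_sum_Ico_succ_bot hk]
    have hz : ∑ i ∈ Finset.Ico (k+1) n, ((W i : ℕ) : ℤ) = 0 :=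
      Finset.sum_eq_zero (fun i hi => by
        rw [hW i (Finset.mem_Ico.mp hi).1]; simp)
    rw [hz]; ring
  have hZ1pre : ∑ i ∈ Finset.range k, ((Z1 i : ℕ) : ℤ) = S1 :=
    Finset.sum_congr rfl (fun i hi => by
      rw [hZ1]; simp [Finset.mem_range.mp hi])
  have hZ2pre : ∑ i ∈ Finset.range k, ((Z2 i : ℕ) : ℤ) = S2 :=
    Finset.sum_congr rfl (fun i hi => by
      rw [hZ2]; simp [Finset.mem_range.mp hi])
  have hZ1k : Z1 k = xs := by rw [hZ1]; simp
  have hZ2k : Z2 k = xs := by rw [hZ2]; simp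
  have hsplit1 : ∑ i ∈ Finset.range n, ((Z1 i : ℕ) : ℤ) = S1 + ((xs : ℕ) : ℤ) := by
    rw [hsplit Z1 (fun i hi => by rw [hZ1]; simp [Nat.lt_asymm hi, Nat.ne_of_gt hi]),
      hZ1pre, hZ1k]
  have hsplit2 : ∑ i ∈ Finset.range n, ((Z2 i : ℕ) : ℤ) = S2 + ((xs : ℕ) : ℤ) := by
    rw [hsplit Z2 (fun i hi => by rw [hZ2]; simp [Nat.lt_asymm hi, Nat.ne_of_gt hi]),
      hZ2pre, hZ2k]
  -- divisibility of the two input sums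
  have hdd1 : (d:ℤ) ∣ ∑ i ∈ Finset.range n, ((Z1 i : ℕ) : ℤ) := by
    rw [hsplit1, ← ZMod.intCast_zmod_eq_zero_iff_dvd]
    push_cast
    rw [hxscast]
    push_cast
    ring
  have hdd2 : (d:ℤ) ∣ ∑ i ∈ Finset.range n, ((Z2 i : ℕ) : ℤ) := by
    rw [hsplit2, ← ZMod.intCast_zmod_eq_zero_iff_dvd]
    have h21 : ((S2 - S1 : ℤ) : ZMod d) = 0 := (ZMod.intCast_zmod_eq_zero_iff_dvd _ _).mpr hSd
    push_cast
    rw [hxscast]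
    push_cast at h21
    linear_combination h21
  -- runs agree with prefixes below k, and with each other from k on
  have hZX1 : ∀ i, i ≤ k → P.run Z1 i = P.run X1 i := fun i hi =>
    P.run_congr i (fun j hj => by rw [hZ1]; simp [hj.trans_le hi])
  have hZX2 : ∀ i, i ≤ k → P.run Z2 i = P.run X2 i := fun i hi =>
    P.run_congr i (fun j hj => by rw [hZ2]; simp [hj.trans_le hi])
  have hZZ : ∀ i, k ≤ i → Z1 i = Z2 i := by
    intro i hi
    rw [hZ1, hZ2]; simp [Nat.not_lt.mpr hi]
  have hruns : ∀ j, P.run Z1 (k + j) = P.run Z2 (k + j) := by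
    intro j
    induction j with
    | zero =>
      simpa using (by rw [hZX1 k le_rfl, hr1, ← hr2, ← hZX2 k le_rfl] :
        P.run Z1 k = P.run Z2 k)
    | succ j ih =>
      have : k + (j+1) = (k + j) + 1 := rfl
      rw [this, run_succ, run_succ, ih, hZZ (k+j) (Nat.le_add_right k j)]
  have hrun' : ∀ i, k ≤ i → P.run Z1 i = P.run Z2 i := by
    intro i hi
    have := hruns (i - k)
    rwa [Nat.add_sub_cancel' hi] at this
  -- output sums
  have hosplit : ∀ (W : ℕ → Fin d),
      ∑ i ∈ Finset.range n, ((P.out i (W i) (P.run W i)) : ℤ)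
        = (∑ i ∈ Finset.range k, ((P.out i (W i) (P.run W i)) : ℤ))
          + ∑ i ∈ Finset.Ico k n, ((P.out i (W i) (P.run W i)) : ℤ) := fun W =>
    (Finset.sum_range_add_sum_Ico _ (le_of_lt hk)).symm
  have hZ1out : ∑ i ∈ Finset.range k, ((P.out i (Z1 i) (P.run Z1 i)) : ℤ) = Y1 :=
    Finset.sum_congr rfl (fun i hi => by
      have hik := Finset.mem_range.mp hi
      rw [hZX1 i (le_of_lt hik)]
      rw [show Z1 i = X1 i from by rw [hZ1]; simp [hik]])
  have hZ2out : ∑ i ∈ Finset.range k, ((P.out i (Z2 i) (P.run Z2 i)) : ℤ) = Y2 :=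
    Finset.sum_congr rfl (fun i hi => by
      have hik := Finset.mem_range.mp hi
      rw [hZX2 i (le_of_lt hik)]
      rw [show Z2 i = X2 i from by rw [hZ2]; simp [hik]])
  have hC : ∑ i ∈ Finset.Ico k n, ((P.out i (Z1 i) (P.run Z1 i)) : ℤ)
      = ∑ i ∈ Finset.Ico k n, ((P.out i (Z2 i) (P.run Z2 i)) : ℤ) :=
    Finset.sum_congr rfl (fun i hi => by
      have hki := (Finset.mem_Ico.mp hi).1
      rw [hZZ i hki, hrun' i hki])
  -- apply solvability
  have H1 := (hP Z1 hdd1).dvd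
  have H2 := (hP Z2 hdd2).dvd
  rw [hsplit1, hosplit Z1, hZ1out] at H1
  rw [hsplit2, hosplit Z2, hZ2out, ← hC] at H2
  have key : ((m:ℤ) * d) ∣ (P.vI X2 k - P.vI X1 k) := by
    have e : P.vI X2 k - P.vI X1 k
        = ((S2 + ((xs : ℕ) : ℤ)) - (d:ℤ) * (Y2 + ∑ i ∈ Finset.Ico k n, ((P.out i (Z1 i) (P.run Z1 i)) : ℤ)))
          - ((S1 + ((xs : ℕ) : ℤ)) - (d:ℤ) * (Y1 + ∑ i ∈ Finset.Ico k n, ((P.out i (Z1 i) (P.run Z1 i)) : ℤ))) := by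
      rw [hvS1, hvS2]; ring
    rw [e]
    exact dvd_sub H2 H1
  rw [← hv1, ← hv2, ZMod.intCast_eq_intCast_iff]
  have hmod : ((m*d : ℕ) : ℤ) = (m:ℤ)*d := by push_cast; ring
  rw [hmod]
  exact Int.modEq_iff_dvd.mpr key

lemma reach_step (P : SeqProtocol n m d) {k : ℕ} {μ : P.Msg k} {v : ZMod (m*d)}
    (h : P.Reach k μ v) (x : Fin d) :
    P.Reach (k+1) (P.send k x μ)
      (v + ((((x : ℕ) : ℤ) - (d:ℤ) * ((P.out k x μ) : ℤ) : ℤ) : ZMod (m*d))) := by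
  obtain ⟨X, hr, hv⟩ := h
  classical
  have e0 : (if k < k then X k else x) = x := if_neg (lt_irrefl k)
  have e1 : P.run (fun i => if i < k then X i else x) k = μ := by
    have := P.run_congr (X := fun i => if i < k then X i else x) (Y := X) k
      (fun i hi => by simp [hi])
    rw [this, hr]
  have e2 : P.vI (fun i => if i < k then X i else x) k = P.vI X k :=
    P.vI_congr k (fun i hi => by simp [hi])
  refine ⟨fun i => if i < k then X i else x, ?_, ?_⟩
  · rw [run_succ, e0, e1]
  · rw [P.vI_succ, e2, e0, e1]
    push_cast
    rw [hv]

noncomputable def Aset (P : SeqProtocol n m d) (k : ℕ) (μ : P.Msg k) [NeZero (m*d)] :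
    Finset (ZMod (m*d)) :=
  @Finset.filter _ (fun v => P.Reach k μ v) (Classical.decPred _) Finset.univ

lemma mem_Aset [NeZero (m*d)] {P : SeqProtocol n m d} {k : ℕ} {μ : P.Msg k}
    {v : ZMod (m*d)} : v ∈ P.Aset k μ ↔ P.Reach k μ v := by
  unfold Aset
  simp

noncomputable def Phi (P : SeqProtocol n m d) (k : ℕ) [NeZero (m*d)] : ℕ :=
  (@Finset.univ _ (P.msgFintype k)).sup (fun μ => (P.Aset k μ).card)

lemma no_stab (hm0 : 0 < m) (hmeven : Even m) {s : ℕ} (hd : d = 2^s)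
    (U : Finset (ZMod (m*d))) (hne : U.Nonempty)
    (hinj : Set.InjOn (ZMod.castHom (dvd_mul_left d m) (ZMod d)) U)
    (δ : ZMod (m*d)) (hδ : ZMod.castHom (dvd_mul_left d m) (ZMod d) δ ≠ 0)
    (hstab : ∀ u ∈ U, u + δ ∈ U) : False := by
  have hd0 : 0 < d := hd ▸ pow_pos two_pos s
  haveI : NeZero d := ⟨hd0.ne'⟩
  haveI : NeZero (m*d) := ⟨(Nat.mul_pos hm0 hd0).ne'⟩
  set π := ZMod.castHom (dvd_mul_left d m) (ZMod d) with hπ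
  obtain ⟨u0, hu0⟩ := hne
  have horb : ∀ j : ℕ, u0 + j • δ ∈ U := by
    intro j
    induction j with
    | zero => simpa using hu0
    | succ j ih =>
      have h2 : u0 + (j+1) • δ = (u0 + j • δ) + δ := by rw [succ_nsmul, add_assoc]
      rw [h2]; exact hstab _ ih
  have hker : ∀ j : ℕ, π (j • δ) = 0 → j • δ = 0 := by
    intro j h0
    have heq : π (u0 + j • δ) = π u0 := by rw [map_add, h0, add_zero]
    have e2 := hinj (Finset.mem_coe.mpr (horb j)) (Finset.mem_coe.mpr hu0) heq
    exact add_eq_left.mp e2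
  set L := addOrderOf (π δ) with hL
  have hLd : L ∣ d := by
    have h := addOrderOf_dvd_card (x := π δ)
    rwa [ZMod.card] at h
  have hLδ : L • δ = 0 := by
    refine hker L ?_
    rw [map_nsmul]
    exact addOrderOf_nsmul_eq_zero (π δ)
  have hLne1 : L ≠ 1 := by
    intro h1
    apply hδ
    have h := addOrderOf_nsmul_eq_zero (π δ)
    rwa [← hL, h1, one_nsmul] at h
  obtain ⟨j, hjs, hLj⟩ := (Nat.dvd_prime_pow Nat.prime_two).mp (hd ▸ hLd)
  have hj1 : 1 ≤ j := by
    rcases Nat.eq_zero_or_pos j with h | h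
    · exact absurd (by rw [hLj, h, pow_zero]) hLne1
    · exact h
  obtain ⟨i, rfl⟩ : ∃ i, j = i + 1 := ⟨j - 1, (Nat.succ_pred_eq_of_pos hj1).symm⟩
  have hδcast : ((δ.val : ℕ) : ZMod (m*d)) = δ := by rw [ZMod.natCast_val, ZMod.cast_id]
  have hdvd : m * d ∣ L * δ.val := by
    have h0 : ((L * δ.val : ℕ) : ZMod (m*d)) = 0 := by
      push_cast
      rw [hδcast, ← nsmul_eq_mul]
      exact hLδ
    exact (ZMod.natCast_eq_zero_iff _ _).mp h0
  obtain ⟨t, ht⟩ := hdvd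
  set d' := 2^(s - (i+1)) with hd'
  have hLd' : L * d' = d := by
    rw [hLj, hd, hd', ← pow_add]
    congr 1
    omega
  have hval : δ.val = m * d' * t := by
    have h2 : L * δ.val = L * (m * d' * t) := by
      rw [ht, ← hLd']; ring
    exact Nat.eq_of_mul_eq_mul_left (by rw [hLj]; positivity) h2
  obtain ⟨m', hm'⟩ := hmeven
  have hπδval : π δ = ((δ.val : ℕ) : ZMod d) := by
    conv_lhs => rw [← hδcast]
    rw [map_natCast]
  have hzero : (2^i) • (π δ) = 0 := by
    rw [hπδval, hval, nsmul_eq_mul]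
    have hcast : ((2^i : ℕ) : ZMod d) * ((m * d' * t : ℕ) : ZMod d)
        = ((2^i * (m * d' * t) : ℕ) : ZMod d) := by push_cast; ring
    rw [hcast]
    refine (ZMod.natCast_eq_zero_iff _ _).mpr ⟨m' * t, ?_⟩
    calc 2^i * (m * d' * t) = (2^(i+1) * d') * (m' * t) := by rw [hm']; ring
      _ = d * (m' * t) := by rw [← hLd', hLj]
  have hcontra : L ≤ 2^i := addOrderOf_le_of_nsmul_eq_zero (pow_pos two_pos i) hzero
  rw [hLj] at hcontra
  exact absurd hcontra (Nat.not_le.mpr (Nat.pow_lt_pow_right one_lt_two (Nat.lt_succ_self i)))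

lemma card_le_phi (P : SeqProtocol n m d) (k : ℕ) [NeZero (m*d)] (μ : P.Msg k) :
    (P.Aset k μ).card ≤ P.Phi k := by
  unfold Phi
  exact Finset.le_sup (f := fun μ => (P.Aset k μ).card) (@Finset.mem_univ _ (P.msgFintype k) μ)

lemma phi_exists (P : SeqProtocol n m d) (hd0 : 0 < d) (k : ℕ) [NeZero (m*d)] :
    ∃ μ : P.Msg k, P.Phi k = (P.Aset k μ).card := by
  have hne : (@Finset.univ _ (P.msgFintype k)).Nonempty :=
    ⟨P.run (fun _ => ⟨0, hd0⟩) k, @Finset.mem_univ _ (P.msgFintype k) _⟩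
  obtain ⟨μ, -, hμ⟩ := Finset.exists_mem_eq_sup (@Finset.univ _ (P.msgFintype k))
    hne (fun μ => (P.Aset k μ).card)
  exact ⟨μ, hμ⟩

lemma phi_sup_le (P : SeqProtocol n m d) (k : ℕ) [NeZero (m*d)] {b : ℕ}
    (h : ∀ μ : P.Msg k, (P.Aset k μ).card ≤ b) : P.Phi k ≤ b := by
  unfold Phi
  exact Finset.sup_le (fun μ _ => h μ)

lemma phi_pos (P : SeqProtocol n m d) (hd0 : 0 < d) [NeZero (m*d)] (k : ℕ) :
    1 ≤ P.Phi k := by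
  have hre : P.Reach k (P.run (fun _ => ⟨0, hd0⟩) k)
      (((P.vI (fun _ => ⟨0, hd0⟩) k : ℤ) : ZMod (m*d))) := ⟨fun _ => ⟨0, hd0⟩, rfl, rfl⟩
  have h1 : 1 ≤ (P.Aset k (P.run (fun _ => ⟨0, hd0⟩) k)).card :=
    Finset.card_pos.mpr ⟨_, mem_Aset.mpr hre⟩
  exact le_trans h1 (P.card_le_phi k _)

lemma phi_le (P : SeqProtocol n m d) (hP : P.Solves) (hm0 : 0 < m) (hd0 : 0 < d)
    [NeZero (m*d)] {k : ℕ} (hk : k < n) : P.Phi k ≤ d := by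
  haveI : NeZero d := ⟨hd0.ne'⟩
  apply P.phi_sup_le
  intro μ
  have hinj : Set.InjOn (ZMod.castHom (dvd_mul_left d m) (ZMod d)) (P.Aset k μ) := by
    intro a ha b hb hab
    exact P.class_unique hP hm0 hd0 hk (mem_Aset.mp (Finset.mem_coe.mp ha))
      (mem_Aset.mp (Finset.mem_coe.mp hb)) hab
  calc (P.Aset k μ).card ≤ (Finset.univ : Finset (ZMod d)).card :=
        Finset.card_le_card_of_injOn _ (fun a _ => Finset.mem_univ _) hinj
    _ = d := by rw [Finset.card_univ, ZMod.card]

lemma phi_mono (P : SeqProtocol n m d) (hd0 : 0 < d) [NeZero (m*d)] (k : ℕ) :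
    P.Phi k ≤ P.Phi (k+1) := by
  obtain ⟨μ, hμ⟩ := P.phi_exists hd0 k
  set x0 : Fin d := ⟨0, hd0⟩ with hx0
  set c : ZMod (m*d) :=
    (((((x0 : ℕ) : ℤ) - (d:ℤ) * ((P.out k x0 μ) : ℤ)) : ℤ) : ZMod (m*d)) with hc
  have hsub : (P.Aset k μ).image (fun u => u + c) ⊆ P.Aset (k+1) (P.send k x0 μ) := by
    intro v hv
    obtain ⟨u, hu, rfl⟩ := Finset.mem_image.mp hv
    exact mem_Aset.mpr (P.reach_step (mem_Aset.mp hu) x0)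
  have hcard : (P.Aset k μ).card ≤ (P.Aset (k+1) (P.send k x0 μ)).card := by
    rw [← Finset.card_image_of_injective (P.Aset k μ) (add_left_injective c)]
    exact Finset.card_le_card hsub
  rw [hμ]
  exact le_trans hcard (P.card_le_phi (k+1) _)

lemma phi_strict (P : SeqProtocol n m d) (hP : P.Solves) (hm0 : 0 < m) (hmeven : Even m)
    {s : ℕ} (hd : d = 2^s) [NeZero (m*d)]
    {k : ℕ} (hk1 : k + 1 < n)
    (hsmall : @Fintype.card _ (P.msgFintype (k+1)) < d) :
    P.Phi k + 1 ≤ P.Phi (k+1) := by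
  have hd0 : 0 < d := hd ▸ pow_pos two_pos s
  haveI : NeZero d := ⟨hd0.ne'⟩
  obtain ⟨μ, ePhi⟩ := P.phi_exists hd0 k
  have hne : (P.Aset k μ).Nonempty := by
    rw [← Finset.card_pos, ← ePhi]
    exact P.phi_pos hd0 k
  obtain ⟨x1, x2, hx, hsend⟩ := @Fintype.exists_ne_map_eq_of_card_lt (Fin d) (P.Msg (k+1))
    _ (P.msgFintype (k+1)) (fun x : Fin d => P.send k x μ) (by rwa [Fintype.card_fin])
  set c1 : ZMod (m*d) :=
    ((((x1 : ℕ) : ℤ) - (d:ℤ) * ((P.out k x1 μ) : ℤ) : ℤ) : ZMod (m*d)) with hc1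
  set c2 : ZMod (m*d) :=
    ((((x2 : ℕ) : ℤ) - (d:ℤ) * ((P.out k x2 μ) : ℤ) : ℤ) : ZMod (m*d)) with hc2
  by_contra hcon
  push_neg at hcon
  have hle : (P.Aset (k+1) (P.send k x1 μ)).card ≤ (P.Aset k μ).card := by
    have h1 : (P.Aset (k+1) (P.send k x1 μ)).card ≤ P.Phi (k+1) :=
      P.card_le_phi (k+1) _
    omega
  have hsub1 : (P.Aset k μ).image (fun u => u + c1) ⊆ P.Aset (k+1) (P.send k x1 μ) := by
    intro v hv
    obtain ⟨u, hu, rfl⟩ := Finset.mem_image.mp hv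
    exact mem_Aset.mpr (P.reach_step (mem_Aset.mp hu) x1)
  have hsub2 : (P.Aset k μ).image (fun u => u + c2) ⊆ P.Aset (k+1) (P.send k x1 μ) := by
    intro v hv
    obtain ⟨u, hu, rfl⟩ := Finset.mem_image.mp hv
    refine mem_Aset.mpr ?_
    rw [hsend]
    exact P.reach_step (mem_Aset.mp hu) x2
  have he1 : (P.Aset k μ).image (fun u => u + c1) = P.Aset (k+1) (P.send k x1 μ) :=
    Finset.eq_of_subset_of_card_le hsub1 (by
      rw [Finset.card_image_of_injective (P.Aset k μ) (add_left_injective c1)]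
      exact hle)
  have he2 : (P.Aset k μ).image (fun u => u + c2) = P.Aset (k+1) (P.send k x1 μ) :=
    Finset.eq_of_subset_of_card_le hsub2 (by
      rw [Finset.card_image_of_injective (P.Aset k μ) (add_left_injective c2)]
      exact hle)
  have hstab : ∀ u ∈ P.Aset k μ, u + (c1 - c2) ∈ P.Aset k μ := by
    intro u hu
    have h1 : u + c1 ∈ (P.Aset k μ).image (fun u => u + c1) :=
      Finset.mem_image_of_mem _ hu
    rw [he1, ← he2] at h1
    obtain ⟨w, hw, hwe⟩ := Finset.mem_image.mp h1
    have : u + (c1 - c2) = w := by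
      have h2 : w + c2 = u + c1 := hwe
      linear_combination -h2
    rwa [this]
  have hπδ : ZMod.castHom (dvd_mul_left d m) (ZMod d) (c1 - c2) ≠ 0 := by
    have hcc : ∀ x : Fin d, ZMod.castHom (dvd_mul_left d m) (ZMod d)
        (((((x : ℕ) : ℤ) - (d:ℤ) * ((P.out k x μ) : ℤ) : ℤ) : ZMod (m*d)))
        = ((x : ℕ) : ZMod d) := by
      intro x
      rw [map_intCast]
      push_cast
      simp
    intro h0
    rw [map_sub, hc1, hc2, hcc x1, hcc x2, sub_eq_zero] at h0
    apply hx
    have hval := congrArg ZMod.val h0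
    rw [ZMod.val_cast_of_lt x1.isLt, ZMod.val_cast_of_lt x2.isLt] at hval
    exact Fin.ext hval
  have hinj : Set.InjOn (ZMod.castHom (dvd_mul_left d m) (ZMod d)) (P.Aset k μ) := by
    intro a ha b hb hab
    exact P.class_unique hP hm0 hd0 (Nat.lt_of_succ_lt hk1)
      (mem_Aset.mp (Finset.mem_coe.mp ha)) (mem_Aset.mp (Finset.mem_coe.mp hb)) hab
  exact no_stab hm0 hmeven hd (P.Aset k μ) hne hinj (c1 - c2) hπδ hstab

lemma phi_count (P : SeqProtocol n m d) (hP : P.Solves) (hm0 : 0 < m) (hmeven : Even m)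
    {s : ℕ} (hd : d = 2^s) [NeZero (m*d)] :
    ∀ k, k < n → P.Phi 0 +
      ((Finset.Icc 1 k).filter (fun j => @Fintype.card _ (P.msgFintype j) < d)).card
        ≤ P.Phi k := by
  have hd0 : 0 < d := hd ▸ pow_pos two_pos s
  intro k
  induction k with
  | zero => intro _; simp
  | succ k ih =>
    intro hk1
    have hk : k < n := Nat.lt_of_succ_lt hk1
    have hIcc : Finset.Icc 1 (k+1) = insert (k+1) (Finset.Icc 1 k) := by
      ext x
      simp only [Finset.mem_Icc, Finset.mem_insert]
      omega
    rw [hIcc, Finset.filter_insert]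
    by_cases hb : @Fintype.card _ (P.msgFintype (k+1)) < d
    · rw [if_pos hb, Finset.card_insert_of_notMem (by
        intro hmem
        have := (Finset.mem_Icc.mp (Finset.mem_filter.mp hmem).1).2
        omega)]
      have h1 := P.phi_strict hP hm0 hmeven hd hk1 hb
      have h2 := ih hk
      omega
    · rw [if_neg hb]
      exact le_trans (ih hk) (P.phi_mono hd0 k)

end SeqProtocol

/-- Any deterministic sequential protocol solving the sequential `n`-point modulo-`(m,d)`
problem (with `m` even and positive, `d = 2^s`, `s ≥ 1`, and `n > m·d`) contains a run of
at least `(n - m·d)/(m·d)` consecutive stages, each of whose message alphabets satisfies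
`m * |M_k| ≥ d`, i.e. each of which sends at least `log₂(d/m)` bits of communication. -/
theorem consecutive_communication_run
    {n m d s : ℕ} (hm : 0 < m) (hmeven : Even m) (hs : 1 ≤ s) (hd : d = 2 ^ s)
    (hn : m * d < n) (P : SeqProtocol n m d) (hP : P.Solves) :
    ∃ a L : ℕ, 1 ≤ a ∧ a + L ≤ n ∧
      ((n : ℝ) - (m : ℝ) * d) / ((m : ℝ) * d) ≤ (L : ℝ) ∧
      ∀ k, a ≤ k → k < a + L → d ≤ m * (@Fintype.card (P.Msg k) (P.msgFintype k)) := by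
  have hm2 : 2 ≤ m := by
    obtain ⟨t, rfl⟩ := hmeven
    omega
  have hd0 : 0 < d := hd ▸ pow_pos two_pos s
  have hd2 : 2 ≤ d := by
    rw [hd]
    calc 2 = 2^1 := (pow_one 2).symm
      _ ≤ 2^s := Nat.pow_le_pow_right (by norm_num) hs
  haveI : NeZero (m*d) := ⟨(Nat.mul_pos hm hd0).ne'⟩
  have hmd4 : 4 ≤ m * d := by
    calc 4 = 2 * 2 := rfl
      _ ≤ m * d := Nat.mul_le_mul hm2 hd2
  have hn1 : 1 ≤ n - 1 := by omega
  -- the bad set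
  set Bad := (Finset.Icc 1 (n-1)).filter
    (fun j => @Fintype.card _ (P.msgFintype j) < d) with hBad
  have hBadcard : Bad.card ≤ d - 1 := by
    have h1 := P.phi_count hP hm hmeven hd (n-1) (by omega)
    have h2 := P.phi_le hP hm hd0 (show n-1 < n by omega)
    have h3 := P.phi_pos hd0 0
    rw [← hBad] at h1
    omega
  set Lw := n / (m*d) with hLw
  have hLw1 : 1 ≤ Lw := (Nat.one_le_div_iff (by positivity)).mpr (le_of_lt hn)
  have hMLw : m * d * Lw ≤ n := by
    rw [hLw, mul_comm]
    exact Nat.div_mul_le_self n (m*d)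
  have hdLw : d * Lw ≤ n - 1 := by
    have h1 : 2 * (d * Lw) ≤ m * (d * Lw) :=
      Nat.mul_le_mul_right _ hm2
    have h2 : m * (d * Lw) = m * d * Lw := by ring
    have h3 : 0 < d * Lw := Nat.mul_pos hd0 hLw1
    omega
  -- find a good window
  have hgood : ∃ j, j < d ∧ ∀ k, 1 + j*Lw ≤ k → k ≤ j*Lw + Lw → k ∉ Bad := by
    by_contra hcon
    push_neg at hcon
    choose f hf1 hf2 hf3 using hcon
    have hinj : Set.InjOn (fun j : Fin d => f j j.isLt) (Finset.univ : Finset (Fin d)) := by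
      have key : ∀ j1 j2 : Fin d, (j1 : ℕ) < (j2 : ℕ) → f j1 j1.isLt ≠ f j2 j2.isLt := by
        intro j1 j2 hlt heq
        have h1 := hf2 j1 j1.isLt
        have h2 := hf1 j2 j2.isLt
        have h3 : ((j1:ℕ)+1) * Lw ≤ (j2:ℕ) * Lw := Nat.mul_le_mul_right _ (by omega)
        have h4 : ((j1:ℕ)+1) * Lw = (j1:ℕ)*Lw + Lw := by ring
        omega
      intro a _ b _ hab
      by_contra hne
      rcases lt_trichotomy (a : ℕ) (b : ℕ) with h | h | h
      · exact key a b h hab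
      · exact hne (Fin.ext h)
      · exact key b a h hab.symm
    have hmaps : ∀ j : Fin d, (fun j : Fin d => f j j.isLt) j ∈ Bad := fun j => hf3 j j.isLt
    have hcard : (Finset.univ : Finset (Fin d)).card ≤ Bad.card :=
      Finset.card_le_card_of_injOn _ (fun a _ => hmaps a) hinj
    rw [Finset.card_univ, Fintype.card_fin] at hcard
    omega
  obtain ⟨j, hjd, hj⟩ := hgood
  have hj1Lw : (j+1) * Lw ≤ d * Lw := Nat.mul_le_mul_right _ (by omega)
  have hexp : (j+1) * Lw = j*Lw + Lw := by ring
  refine ⟨1 + j*Lw, Lw, by omega, by omega, ?_, ?_⟩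
  · -- real inequality
    have hmod : n < m * d * (Lw + 1) := by
      have h1 := Nat.div_add_mod n (m*d)
      rw [← hLw] at h1
      have h2 : n % (m*d) < m*d := Nat.mod_lt _ (by positivity)
      have h3 : m * d * (Lw + 1) = m * d * Lw + m * d := by ring
      omega
    have hcast : (n:ℝ) < (m:ℝ) * d * ((Lw:ℝ) + 1) := by exact_mod_cast hmod
    rw [div_le_iff₀ (by positivity : (0:ℝ) < (m:ℝ)*d)]
    nlinarith
  · intro k hk1 hk2
    have hkBad : k ∉ Bad := hj k hk1 (by omega)
    have hkn : k ≤ n - 1 := by omega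
    have hnot : ¬ (@Fintype.card _ (P.msgFintype k) < d) := by
      intro hlt
      exact hkBad (Finset.mem_filter.mpr ⟨Finset.mem_Icc.mpr ⟨by omega, hkn⟩, hlt⟩)
    have hdle : d ≤ @Fintype.card _ (P.msgFintype k) := Nat.not_lt.mp hnot
    calc d ≤ @Fintype.card _ (P.msgFintype k) := hdle
      _ ≤ m * @Fintype.card _ (P.msgFintype k) := Nat.le_mul_of_pos_left _ hm
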